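/- With the locally budgeted uncertainty set Λ(Γ) = { c : c = c̲ + λ, 0 ≤ λ_j ≤ d_j, ∑_{j∈P_k} λ_j ≤ Γ_k ∀k } and x ∈ {0,1}^n, the robustness value max_{c ∈ Λ(Γ)} c^t x equals the minimum over π ∈ {0,1}^K and ρ ∈ {0,1}^n satisfying π_k + ρ_j ≥ x_j for all k ∈ [K] and j ∈ P_k, of c̲^t x + Γ^t π + d^t ρ. -/

import Mathlib

theorem stmt_3 (n K : ℕ) (P : Fin K → Finset (Fin n)) (hP : ∀ j, ∃! k, j ∈ P k)
    (cbar d : Fin n → ℝ) (hc : ∀ j, 0 ≤ cbar j) (hd : ∀ j, 0 ≤ d j)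
    (Γ : Fin K → ℝ) (hΓ : ∀ k, 0 ≤ Γ k)
    (x : Fin n → ℝ) (hx : ∀ j, x j = 0 ∨ x j = 1) :
    ∃ V : ℝ,
      IsGreatest
        {y | ∃ lam : Fin n → ℝ, (∀ j, 0 ≤ lam j ∧ lam j ≤ d j) ∧
          (∀ k, ∑ j ∈ P k, lam j ≤ Γ k) ∧ y = ∑ j, (cbar j + lam j) * x j} V ∧
      IsLeast
        {y | ∃ π : Fin K → ℝ, ∃ ρ : Fin n → ℝ,
          (∀ k, π k = 0 ∨ π k = 1) ∧ (∀ j, ρ j = 0 ∨ ρ j = 1) ∧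
          (∀ k, ∀ j ∈ P k, x j ≤ π k + ρ j) ∧
          y = ∑ j, cbar j * x j + ∑ k, Γ k * π k + ∑ j, d j * ρ j} V := by
  classical
  -- basic facts about x
  have hx0 : ∀ j, 0 ≤ x j := by
    intro j; rcases hx j with h | h <;> rw [h] <;> norm_num
  have hx1 : ∀ j, x j ≤ 1 := by
    intro j; rcases hx j with h | h <;> rw [h] <;> norm_num
  have hxx : ∀ j, x j * x j = x j := by
    intro j; rcases hx j with h | h <;> rw [h] <;> ring
  -- the partition map
  set κ : Fin n → Fin K := fun j => (hP j).choose with hκdef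
  have hκmem : ∀ j, j ∈ P (κ j) := fun j => (hP j).choose_spec.1
  have hκuniq : ∀ j k, j ∈ P k → κ j = k := fun j k h => ((hP j).choose_spec.2 k h).symm
  have hPfilter : ∀ k, P k = Finset.univ.filter (fun j => κ j = k) := by
    intro k
    ext j
    simp only [Finset.mem_filter, Finset.mem_univ, true_and]
    constructor
    · exact hκuniq j k
    · rintro rfl; exact hκmem j
  have hsplit : ∀ g : Fin n → ℝ, ∑ j, g j = ∑ k, ∑ j ∈ P k, g j := by
    intro g
    rw [show (∑ k, ∑ j ∈ P k, g j) = ∑ k, ∑ j ∈ Finset.univ.filter (fun j => κ j = k), g j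
        from Finset.sum_congr rfl (fun k _ => by rw [hPfilter k])]
    exact (Finset.sum_fiberwise Finset.univ κ g).symm
  -- D k and V
  set D : Fin K → ℝ := fun k => ∑ j ∈ P k, d j * x j with hDdef
  have hD0 : ∀ k, 0 ≤ D k := by
    intro k
    exact Finset.sum_nonneg (fun j _ => mul_nonneg (hd j) (hx0 j))
  set V : ℝ := (∑ j, cbar j * x j) + ∑ k, min (Γ k) (D k) with hVdef
  refine ⟨V, ⟨?_, ?_⟩, ⟨?_, ?_⟩⟩
  · -- V is attained in the max set
    set r : Fin K → ℝ := fun k => if D k ≤ Γ k then 1 else Γ k / D k with hrdef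
    have hr0 : ∀ k, 0 ≤ r k := by
      intro k
      simp only [hrdef]
      split_ifs with h
      · norm_num
      · exact div_nonneg (hΓ k) (hD0 k)
    have hr1 : ∀ k, r k ≤ 1 := by
      intro k
      simp only [hrdef]
      split_ifs with h
      · exact le_refl 1
      · push_neg at h
        exact le_of_lt (div_lt_one (lt_of_le_of_lt (hΓ k) h) |>.mpr h)
    have hrk : ∀ k, r k = if D k ≤ Γ k then 1 else Γ k / D k := fun _ => rfl
    have hDk : ∀ k, (∑ j ∈ P k, d j * x j) = D k := fun _ => rfl
    refine ⟨fun j => d j * x j * r (κ j), fun j => ⟨?_, ?_⟩, ?_, ?_⟩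
    · exact mul_nonneg (mul_nonneg (hd j) (hx0 j)) (hr0 (κ j))
    · calc d j * x j * r (κ j) ≤ d j * 1 * 1 := by
            apply mul_le_mul (mul_le_mul le_rfl (hx1 j) (hx0 j) (hd j)) (hr1 (κ j))
              (hr0 (κ j)) (mul_nonneg (hd j) (by norm_num))
        _ = d j := by ring
    · intro k
      have hsum : ∑ j ∈ P k, d j * x j * r (κ j) = D k * r k := by
        rw [hDdef, Finset.sum_mul]
        apply Finset.sum_congr rfl
        intro j hj
        rw [hκuniq j k hj]
      rw [hsum, hrk k]
      split_ifs with h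
      · simpa using h
      · push_neg at h
        have hDpos : 0 < D k := lt_of_le_of_lt (hΓ k) h
        rw [mul_div_cancel₀ _ (ne_of_gt hDpos)]
    · have key : ∀ k, ∑ j ∈ P k, d j * x j * r (κ j) * x j = min (Γ k) (D k) := by
        intro k
        have : ∀ j ∈ P k, d j * x j * r (κ j) * x j = d j * x j * r k := by
          intro j hj
          rw [hκuniq j k hj]
          calc d j * x j * r k * x j = d j * (x j * x j) * r k := by ring
            _ = d j * x j * r k := by rw [hxx j]
        rw [Finset.sum_congr rfl this, ← Finset.sum_mul, hDk k, hrk k]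
        split_ifs with h
        · rw [min_eq_right h]; ring
        · push_neg at h
          have hDpos : 0 < D k := lt_of_le_of_lt (hΓ k) h
          rw [min_eq_left (le_of_lt h), mul_div_cancel₀ _ (ne_of_gt hDpos)]
      calc V = (∑ j, cbar j * x j) + ∑ k, ∑ j ∈ P k, d j * x j * r (κ j) * x j := by
              rw [hVdef]
              congr 1
              exact Finset.sum_congr rfl (fun k _ => (key k).symm)
        _ = (∑ j, cbar j * x j) + ∑ j, d j * x j * r (κ j) * x j := by
              rw [← hsplit (fun j => d j * x j * r (κ j) * x j)]
        _ = ∑ j, (cbar j + d j * x j * r (κ j)) * x j := by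
              rw [← Finset.sum_add_distrib]
              apply Finset.sum_congr rfl
              intro j _
              ring
  · -- V is an upper bound of the max set
    rintro y ⟨lam, hlam, hlamΓ, rfl⟩
    have expand : ∑ j, (cbar j + lam j) * x j
        = (∑ j, cbar j * x j) + ∑ j, lam j * x j := by
      rw [← Finset.sum_add_distrib]
      apply Finset.sum_congr rfl
      intro j _
      ring
    rw [expand, hVdef]
    apply add_le_add_right
    rw [hsplit (fun j => lam j * x j)]
    apply Finset.sum_le_sum
    intro k _
    apply le_min
    · calc ∑ j ∈ P k, lam j * x j ≤ ∑ j ∈ P k, lam j := by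
            apply Finset.sum_le_sum
            intro j _
            calc lam j * x j ≤ lam j * 1 := by
                  exact mul_le_mul_of_nonneg_left (hx1 j) (hlam j).1
              _ = lam j := by ring
        _ ≤ Γ k := hlamΓ k
    · apply Finset.sum_le_sum
      intro j _
      exact mul_le_mul_of_nonneg_right (hlam j).2 (hx0 j)
  · -- V is attained in the min set
    set π : Fin K → ℝ := fun k => if Γ k ≤ D k then 1 else 0 with hπdef
    set ρ : Fin n → ℝ := fun j => x j * (1 - π (κ j)) with hρdef
    have hπbin : ∀ k, π k = 0 ∨ π k = 1 := by
      intro k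
      simp only [hπdef]
      split_ifs <;> simp
    refine ⟨π, ρ, hπbin, ?_, ?_, ?_⟩
    · intro j
      simp only [hρdef]
      rcases hx j with h | h
      · left; rw [h]; ring
      · rcases hπbin (κ j) with h2 | h2
        · right; rw [h, h2]; ring
        · left; rw [h, h2]; ring
    · intro k j hj
      have hk : κ j = k := hκuniq j k hj
      simp only [hρdef, hk]
      rcases hx j with h | h
      · rw [h]
        rcases hπbin k with h2 | h2 <;> rw [h2] <;> norm_num
      · rw [h]; ring_nf; rfl
    · have hρval : ∀ k, ∑ j ∈ P k, d j * ρ j = D k * (1 - π k) := by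
        intro k
        rw [hDdef, Finset.sum_mul]
        apply Finset.sum_congr rfl
        intro j hj
        simp only [hρdef, hκuniq j k hj]
        ring
      have : ∑ j, d j * ρ j = ∑ k, D k * (1 - π k) := by
        rw [hsplit (fun j => d j * ρ j)]
        exact Finset.sum_congr rfl (fun k _ => hρval k)
      rw [this, hVdef, add_assoc]
      congr 1
      rw [← Finset.sum_add_distrib]
      apply Finset.sum_congr rfl
      intro k _
      simp only [hπdef]
      split_ifs with h
      · rw [min_eq_left h]; ring
      · push_neg at h
        rw [min_eq_right (le_of_lt h)]; ring
  · -- V is a lower bound of the min set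
    rintro y ⟨π, ρ, hπbin, hρbin, hcons, rfl⟩
    rw [hVdef, add_assoc]
    apply add_le_add_right
    have hρ0 : ∀ j, 0 ≤ ρ j := by
      intro j; rcases hρbin j with h | h <;> rw [h] <;> norm_num
    have : ∑ j, d j * ρ j = ∑ k, ∑ j ∈ P k, d j * ρ j := hsplit _
    rw [this, ← Finset.sum_add_distrib]
    apply Finset.sum_le_sum
    intro k _
    rcases hπbin k with h | h
    · -- π k = 0 : ρ covers, so sum ≥ D k
      rw [h]
      have : D k ≤ ∑ j ∈ P k, d j * ρ j := by
        rw [hDdef]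
        apply Finset.sum_le_sum
        intro j hj
        apply mul_le_mul_of_nonneg_left _ (hd j)
        have := hcons k j hj
        rw [h] at this
        linarith
      calc min (Γ k) (D k) ≤ D k := min_le_right _ _
        _ ≤ Γ k * 0 + ∑ j ∈ P k, d j * ρ j := by
            rw [mul_zero, zero_add]; exact this
    · -- π k = 1 : sum ≥ Γ k
      rw [h]
      have : 0 ≤ ∑ j ∈ P k, d j * ρ j :=
        Finset.sum_nonneg (fun j _ => mul_nonneg (hd j) (hρ0 j))
      calc min (Γ k) (D k) ≤ Γ k := min_le_left _ _
        _ ≤ Γ k * 1 + ∑ j ∈ P k, d j * ρ j := by rw [mul_one]; linarith
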